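/- arXiv:2404.01510 — 6 statements merged into one kernel-verified Lean document; each statement's English description precedes it below -/
import Mathlib

section
/- Every characteristic matrix over the polytope (Δ³)ⁿ is equivalent to a block matrix of the form (E₃ a₁₁ | ⋯ | E₃ aₙₙ) placed so that the columns indexed by facets F_{i1},F_{i2},F_{i3} carry the i-th block of the 3n×3n identity, and the column of F_{i4} is the vector (a_{1i},…,a_{ni}) with a_{ij} ∈ ℤ³, where a_{ii} = ᵗ(1,1,1) for all i. -/
/- The polytope (Δ³)ⁿ has facets F_{ij}, indexed by `(i, j) : Fin n × Fin 4`.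
A collection of 3n facets of (Δ³)ⁿ meets at a vertex exactly when it omits,
for each `i`, precisely one facet `(i, ω i)`; the remaining column indices are
enumerated by `(i, (ω i).succAbove j)` for `j : Fin 3`. -/


open Matrix in
theorem det_one_updateColumn {m R : Type*} [Fintype m] [DecidableEq m] [CommRing R]
    (k : m) (v : m → R) : ((1 : Matrix m m R).updateCol k v).det = v k := by
  have h : (1 : Matrix m m R).updateCol k v
      = 1 + replicateCol Unit (v - (Pi.single k (1 : R) : m → R)) * replicateRow Unit ((Pi.single k (1 : R) : m → R)) := by
    ext i j
    by_cases hj : j = k <;>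
      simp [updateCol_apply, hj, Matrix.one_apply, Matrix.mul_apply,
        Fintype.sum_unique, Pi.single_apply, mul_comm]
  rw [h, det_one_add_replicateCol_mul_replicateRow]
  simp [dotProduct, Pi.single_apply]

/-- The permutation of `Fin 3` matching columns of the vertex submatrix. -/
def rhoStd (j₀ : Fin 3) : Equiv.Perm (Fin 3) where
  toFun c := if c = 2 then j₀ else if (c : ℕ) < (j₀ : ℕ) then c else c + 1
  invFun c := if c = j₀ then 2 else if (c : ℕ) < (j₀ : ℕ) then c else c - 1
  left_inv := by revert j₀; decide
  right_inv := by revert j₀; decide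

lemma rhoStd_keyA : ∀ (j₀ c : Fin 3),
    (Fin.castSucc j₀).succAbove c
      = if c = 2 then (3 : Fin 4) else Fin.castSucc (rhoStd j₀ c) := by decide

lemma rhoStd_keyB : ∀ (j₀ c : Fin 3), c ≠ 2 → rhoStd j₀ c ≠ j₀ := by decide

lemma rhoStd_keyC : ∀ j₀ : Fin 3, rhoStd j₀ 2 = j₀ := by decide


/-- A characteristic matrix over `(Δ³)ⁿ`: a `3n × 4n` integer matrix (rows
`Fin n × Fin 3`, columns indexed by the facets `Fin n × Fin 4`) such that the
3n columns corresponding to any 3n facets meeting at a vertex form a matrix of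
determinant ±1. -/
def IsCharMatrixDelta3 (n : ℕ)
    (A : Matrix (Fin n × Fin 3) (Fin n × Fin 4) ℤ) : Prop :=
  ∀ ω : Fin n → Fin 4,
    IsUnit (Matrix.det (Matrix.of fun r c : Fin n × Fin 3 =>
      A r (c.1, (ω c.1).succAbove c.2)))

/-- Equivalence of characteristic matrices over `(Δ³)ⁿ`: `A = α·(Q B D)` with
`Q ∈ GL_{3n}(ℤ)`, `D` diagonal with entries ±1, and `α` an automorphism of
`(Δ³)ⁿ` acting on the columns (the automorphisms of `(Δ³)ⁿ` permute the `n`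
simplex factors and the 4 facets within each factor). -/
def CharEquivDelta3 (n : ℕ)
    (A B : Matrix (Fin n × Fin 3) (Fin n × Fin 4) ℤ) : Prop :=
  ∃ (Q : Matrix (Fin n × Fin 3) (Fin n × Fin 3) ℤ), IsUnit Q.det ∧
  ∃ D : Fin n × Fin 4 → ℤ, (∀ c, D c = 1 ∨ D c = -1) ∧
  ∃ (σ : Equiv.Perm (Fin n)) (τ : Fin n → Equiv.Perm (Fin 4)),
    ∀ r c, A r c = (Q * B * Matrix.diagonal D) r (σ c.1, τ c.1 c.2)

/- STATEMENT 6: Every characteristic matrix over `(Δ³)ⁿ` is equivalent to a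
matrix in standard form: the columns indexed by the facets F_{i1}, F_{i2},
F_{i3} carry the i-th block of the 3n × 3n identity matrix, and the column of
F_{i4} is the vector (a_{1i},…,a_{ni}) with a_{ij} ∈ ℤ³ and
a_{ii} = ᵗ(1,1,1). -/
theorem stmt6 (n : ℕ) (A : Matrix (Fin n × Fin 3) (Fin n × Fin 4) ℤ)
    (hA : IsCharMatrixDelta3 n A) :
    ∃ B : Matrix (Fin n × Fin 3) (Fin n × Fin 4) ℤ,
      CharEquivDelta3 n A B ∧
      (∀ (i : Fin n) (j : Fin 3) (r : Fin n × Fin 3),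
        B r (i, Fin.castSucc j) = if r = (i, j) then 1 else 0) ∧
      (∀ (i : Fin n) (j' : Fin 3), B (i, j') (i, (3 : Fin 4)) = 1) := by
  classical
  set M : Matrix (Fin n × Fin 3) (Fin n × Fin 3) ℤ :=
    Matrix.of fun r c => A r (c.1, Fin.castSucc c.2) with hMdef
  have hM : IsUnit M.det := by
    have h0 := hA (fun _ => Fin.last 3)
    simp only [Fin.succAbove_last] at h0
    simpa [hMdef] using h0
  have hMM : M⁻¹ * M = 1 := Matrix.nonsing_inv_mul M hM
  have hMM' : M * M⁻¹ = 1 := Matrix.mul_nonsing_inv M hM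
  have hMinv : IsUnit (M⁻¹).det := by
    apply IsUnit.of_mul_eq_one M.det
    rw [← Matrix.det_mul, hMM, Matrix.det_one]
  set B₀ : Matrix (Fin n × Fin 3) (Fin n × Fin 4) ℤ := M⁻¹ * A with hB₀def
  have hB₀id : ∀ (i : Fin n) (j : Fin 3) (r : Fin n × Fin 3),
      B₀ r (i, Fin.castSucc j) = (1 : Matrix (Fin n × Fin 3) (Fin n × Fin 3) ℤ) r (i, j) := by
    intro i j r
    have h1 : B₀ r (i, Fin.castSucc j) = (M⁻¹ * M) r (i, j) := by
      simp [hB₀def, Matrix.mul_apply, hMdef]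
    rw [h1, hMM]
  have hunit : ∀ (i₀ : Fin n) (j₀ : Fin 3), IsUnit (B₀ (i₀, j₀) (i₀, 3)) := by
    intro i₀ j₀
    set ω : Fin n → Fin 4 := fun i => if i = i₀ then Fin.castSucc j₀ else Fin.last 3 with hω
    have hsel : IsUnit ((Matrix.of fun r c : Fin n × Fin 3 =>
        B₀ r (c.1, (ω c.1).succAbove c.2)).det) := by
      have h2 : (Matrix.of fun r c : Fin n × Fin 3 => B₀ r (c.1, (ω c.1).succAbove c.2))
          = M⁻¹ * (Matrix.of fun r c : Fin n × Fin 3 => A r (c.1, (ω c.1).succAbove c.2)) := by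
        ext r c
        simp [hB₀def, Matrix.mul_apply]
      rw [h2, Matrix.det_mul]
      exact hMinv.mul (hA ω)
    set π : Equiv.Perm (Fin n × Fin 3) :=
      Equiv.prodShear (Equiv.refl (Fin n))
        (fun i => if i = i₀ then rhoStd j₀ else Equiv.refl (Fin 3)) with hπ
    set v : Fin n × Fin 3 → ℤ := fun r => B₀ r (i₀, 3) with hv
    have hC : (Matrix.of fun r c : Fin n × Fin 3 => B₀ r (c.1, (ω c.1).succAbove c.2))
        = (((1 : Matrix (Fin n × Fin 3) (Fin n × Fin 3) ℤ).updateCol (i₀, j₀) v).submatrix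
            id π) := by
      ext r c
      obtain ⟨ci, cj⟩ := c
      simp only [Matrix.of_apply, Matrix.submatrix_apply, id_eq, hπ,
        Equiv.prodShear_apply, Equiv.refl_apply]
      by_cases hci : ci = i₀
      · subst hci
        simp only [hω, if_pos rfl]
        simp only [eq_self_iff_true, if_true]
        by_cases hcj : cj = 2
        · subst hcj
          rw [rhoStd_keyA, if_pos rfl, rhoStd_keyC]
          simp [Matrix.updateCol_apply, hv]
        · rw [rhoStd_keyA, if_neg hcj, hB₀id]
          rw [Matrix.updateCol_apply,
            if_neg (by simp [Prod.ext_iff, rhoStd_keyB j₀ cj hcj])]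
      · simp only [hω, if_neg hci, Equiv.refl_apply]
        rw [Fin.succAbove_last, hB₀id]
        rw [Matrix.updateCol_apply, if_neg (by simp [Prod.ext_iff, hci])]
    rw [hC, Matrix.det_permute', det_one_updateColumn] at hsel
    exact isUnit_of_mul_isUnit_right hsel
  set ε : Fin n × Fin 3 → ℤ := fun r => B₀ r (r.1, 3) with hεdef
  have hε : ∀ r, ε r = 1 ∨ ε r = -1 := fun r => Int.isUnit_iff.mp (hunit r.1 r.2)
  have hε2 : ∀ r, ε r * ε r = 1 := by
    intro r; rcases hε r with h | h <;> rw [h] <;> norm_num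
  set d : Fin n × Fin 4 → ℤ :=
    fun c => if hc : (c.2 : ℕ) < 3 then ε (c.1, ⟨(c.2 : ℕ), hc⟩) else 1 with hddef
  have hd : ∀ c, d c = 1 ∨ d c = -1 := by
    intro c
    simp only [hddef]
    split
    · exact hε _
    · exact Or.inl rfl
  have hd2 : ∀ c, d c * d c = 1 := by
    intro c; rcases hd c with h | h <;> rw [h] <;> norm_num
  have hdiagε : Matrix.diagonal ε * Matrix.diagonal ε = 1 := by
    rw [Matrix.diagonal_mul_diagonal]
    rw [show (fun i => ε i * ε i) = fun _ => (1 : ℤ) from funext fun r => hε2 r,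
      Matrix.diagonal_one]
  have hdiagd : Matrix.diagonal d * Matrix.diagonal d = 1 := by
    rw [Matrix.diagonal_mul_diagonal]
    rw [show (fun i => d i * d i) = fun _ => (1 : ℤ) from funext fun c => hd2 c,
      Matrix.diagonal_one]
  set B : Matrix (Fin n × Fin 3) (Fin n × Fin 4) ℤ :=
    Matrix.diagonal ε * B₀ * Matrix.diagonal d with hBdef
  have hBentry : ∀ r c, B r c = ε r * B₀ r c * d c := by
    intro r c
    rw [hBdef, Matrix.mul_diagonal, Matrix.diagonal_mul]
  have key : M * Matrix.diagonal ε * B * Matrix.diagonal d = A := by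
    rw [hBdef]
    calc M * Matrix.diagonal ε * (Matrix.diagonal ε * B₀ * Matrix.diagonal d)
          * Matrix.diagonal d
        = M * (Matrix.diagonal ε * Matrix.diagonal ε) * B₀
            * (Matrix.diagonal d * Matrix.diagonal d) := by
          simp only [Matrix.mul_assoc]
      _ = M * B₀ := by rw [hdiagε, hdiagd, Matrix.mul_one, Matrix.mul_one]
      _ = A := by rw [hB₀def, ← Matrix.mul_assoc, hMM', Matrix.one_mul]
  refine ⟨B, ⟨M * Matrix.diagonal ε, ?_, d, hd, 1, fun _ => 1, ?_⟩, ?_, ?_⟩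
  · rw [Matrix.det_mul, Matrix.det_diagonal]
    refine hM.mul (IsUnit.of_mul_eq_one (∏ r, ε r) ?_)
    rw [← Finset.prod_mul_distrib]
    exact Finset.prod_eq_one fun r _ => hε2 r
  · intro r c
    simp only [Equiv.Perm.coe_one, id_eq, key]
  · intro i j r
    rw [hBentry]
    have hdc : d (i, Fin.castSucc j) = ε (i, j) := by
      simp only [hddef]
      rw [dif_pos (show ((Fin.castSucc j : Fin 4) : ℕ) < 3 from j.isLt)]
      congr 1
    rw [hdc, hB₀id]
    by_cases hr : r = (i, j)
    · subst hr; simp [Matrix.one_apply, hε2]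
    · simp [Matrix.one_apply, hr]
  · intro i j'
    rw [hBentry]
    have hdc : d (i, (3 : Fin 4)) = 1 := by
      simp only [hddef]
      rw [dif_neg (by decide)]
    rw [hdc, mul_one]
    exact hε2 (i, j')
end

section
/- In the graded ring H*(M(A);ℤ₂) = ℤ₂[t₁,…,t_n]/(q₁,…,q_n) with q_i = t_i · ∏_{j=1}^{3} ( ∑_{k=1}^{n} a_{ik}^j t_k ) and a_{ii} = ᵗ(1,1,1), the Steenrod square satisfies Sq²q_i = ∑_{k ≠ i} (a_{ik}^1 + a_{ik}^2 + a_{ik}^3) t_k q_i. -/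
open MvPolynomial

/- STATEMENT 7: In H*(M(A);ℤ₂) = ℤ₂[t₁,…,t_n]/(q₁,…,q_n) with
q_i = t_i · ∏_{j=1}^{3} ( ∑_{k=1}^{n} a_{ik}^j t_k ) and a_{ii} = ᵗ(1,1,1),
the Steenrod square satisfies Sq²q_i = ∑_{k ≠ i} (a_{ik}^1+a_{ik}^2+a_{ik}^3) t_k q_i.

By the Cartan formula, on a product of degree-2 classes x₁x₂x₃x₄ one has
Sq²(x₁x₂x₃x₄) = (x₁+x₂+x₃+x₄)·x₁x₂x₃x₄; here q_i is the product of the four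
linear forms t_i, ∑_k a_{ik}^1 t_k, ∑_k a_{ik}^2 t_k, ∑_k a_{ik}^3 t_k, so the
asserted identity about Sq²q_i reads as the following polynomial identity. -/
theorem stmt7 (n : ℕ) (a : Fin n → Fin n → Fin 3 → ZMod 2)
    (ha : ∀ i j, a i i j = 1)
    (q : Fin n → MvPolynomial (Fin n) (ZMod 2))
    (hq : ∀ i, q i = X i * ∏ j : Fin 3, (∑ k, C (a i k j) * X k)) (i : Fin n) :
    -- Sq² q_i, computed via the Cartan formula, …
    (X i + ∑ j : Fin 3, ∑ k, C (a i k j) * X k) * q i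
      -- … equals ∑_{k ≠ i} (a_{ik}¹ + a_{ik}² + a_{ik}³) t_k q_i :
      = ∑ k ∈ Finset.univ.erase i, C (a i k 0 + a i k 1 + a i k 2) * (X k * q i) := by
  have h : X i + ∑ j : Fin 3, ∑ k, C (a i k j) * X k
      = ∑ k ∈ Finset.univ.erase i, C (a i k 0 + a i k 1 + a i k 2) * X k := by
    rw [Finset.sum_comm]
    have h1 : ∀ k : Fin n, (∑ j : Fin 3, C (a i k j) * X k)
        = C (a i k 0 + a i k 1 + a i k 2) * (X k : MvPolynomial (Fin n) (ZMod 2)) := by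
      intro k
      rw [Fin.sum_univ_three, map_add, map_add, add_mul, add_mul]
    rw [Finset.sum_congr rfl fun k _ => h1 k,
      ← Finset.add_sum_erase (h := Finset.mem_univ i), ha, ha, ha, ← add_assoc]
    have : (1 : ZMod 2) + 1 + 1 = 1 := by decide
    rw [this, map_one, one_mul]
    have : (X i : MvPolynomial (Fin n) (ZMod 2)) + X i = 0 := by
      rw [← two_mul]
      have : (2 : MvPolynomial (Fin n) (ZMod 2)) = 0 := by
        rw [show (2 : MvPolynomial (Fin n) (ZMod 2)) = C 2 from (map_ofNat C 2).symm]
        simp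
        decide
      rw [this, zero_mul]
    rw [this, zero_add]
  rw [h, Finset.sum_mul]
  exact Finset.sum_congr rfl fun k _ => (mul_assoc _ _ _)
end

section
/- For n ≥ 1 and a positive integer k, let H(k,n) = ℤ[t₁,…,t_n]/(t₁⁴+kt₁³t₂, …, t_{n-1}⁴+k t_{n-1}³ t_n, t_n⁴) with |t_i| = 2. If x ∈ H(k,n) has degree 2 and x⁴ = 0, then x = a·t_n for some a ∈ ℤ. -/
open MvPolynomial

/- The graded ring H(k,n) = ℤ[t₁,…,t_n]/(t₁⁴+kt₁³t₂, …, t_{n-1}⁴+kt_{n-1}³t_n, t_n⁴)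
with |t_i| = 2.  We index the `n` variables t₁,…,t_n of the paper by `Fin n`;
a homogeneous element of topological degree `2*j` is (the class of) a polynomial
that is homogeneous of polynomial degree `j`. -/

/-- The ideal (t₁⁴+kt₁³t₂, …, t_{n-1}⁴+k t_{n-1}³t_n, t_n⁴), with the `n`
variables indexed by `Fin (n+1)` for `n+1` variables... -/
noncomputable def Hideal (k n : ℕ) : Ideal (MvPolynomial (Fin (n + 1)) ℤ) :=
  Ideal.span ({X (Fin.last n) ^ 4} ∪
    Set.range fun i : Fin n =>
      X (Fin.castSucc i) ^ 4 + (k : ℤ) • (X (Fin.castSucc i) ^ 3 * X i.succ))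

/-- The ring `H(k, n+1 vars)`: `H k n` has `n+1` variables `t₀,…,t_n`,
so it is the ring H(k, n+1) of the paper. -/
noncomputable abbrev HRing (k n : ℕ) : Type :=
  MvPolynomial (Fin (n + 1)) ℤ ⧸ Hideal k n

/-- The generator t_i of H(k,n). -/
noncomputable def Ht (k n : ℕ) (i : Fin (n + 1)) : HRing k n :=
  Ideal.Quotient.mk _ (X i)

/-- A ring homomorphism `HRing k n → HRing l n` preserves the grading (all
gradings in sight are concentrated in even topological degrees `2*j`) if it
sends classes of homogeneous polynomials of degree `j` to classes of
homogeneous polynomials of degree `j`, for every `j`. -/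
def PreservesGrading {k l n : ℕ} (f : HRing k n →+* HRing l n) : Prop :=
  ∀ (j : ℕ) (x : MvPolynomial (Fin (n + 1)) ℤ), x.IsHomogeneous j →
    ∃ y : MvPolynomial (Fin (n + 1)) ℤ, y.IsHomogeneous j ∧
      f (Ideal.Quotient.mk _ x) = Ideal.Quotient.mk _ y

/-- A graded (ring/algebra) isomorphism H(k,n) ≅ H(l,n): a ring isomorphism
preserving the grading in both directions.  (Every ring homomorphism between
these rings is automatically a ℤ-algebra homomorphism.) -/
def IsGradedIso {k l n : ℕ} (f : HRing k n ≃+* HRing l n) : Prop :=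
  PreservesGrading (f : HRing k n →+* HRing l n) ∧
    PreservesGrading (f.symm : HRing l n →+* HRing k n)

/-! ### Auxiliary lemmas -/

lemma degree_one_single {σ : Type*} (d : σ →₀ ℕ) (h : d.degree = 1) :
    ∃ j, d = Finsupp.single j 1 := by
  classical
  have hne : d ≠ 0 := by
    intro h0; rw [h0, map_zero] at h; omega
  obtain ⟨j, hj⟩ : ∃ j, d j ≠ 0 := by
    by_contra hc; push_neg at hc; exact hne (Finsupp.ext fun i => hc i)
  have hjs : j ∈ d.support := Finsupp.mem_support_iff.mpr hj
  refine ⟨j, ?_⟩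
  have hsum : d j + ∑ i ∈ d.support.erase j, d i = 1 := by
    rw [Finset.add_sum_erase _ _ hjs]; exact h
  have hdj : d j = 1 := by
    have h2 : ∑ i ∈ d.support.erase j, d i ≥ 0 := Nat.zero_le _
    omega
  have hrest : ∀ i ∈ d.support.erase j, d i = 0 := by
    intro i hi
    exact Finset.sum_eq_zero_iff.mp (by omega : ∑ i ∈ d.support.erase j, d i = 0) i hi
  ext i
  by_cases hij : i = j
  · subst hij; simp [hdj]
  · rw [Finsupp.single_apply, if_neg (Ne.symm hij)]
    by_cases his : i ∈ d.support
    · exact hrest i (Finset.mem_erase.mpr ⟨hij, his⟩)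
    · exact Finsupp.notMem_support_iff.mp his

lemma degree_single_one {σ : Type*} (j : σ) : (Finsupp.single j (1 : ℕ)).degree = 1 := by
  classical
  exact Finsupp.degree_single j 1

lemma hideal1_eq (k : ℕ) : Hideal k 1 =
    Ideal.span {X 0 ^ 4 + (k : ℤ) • (X 0 ^ 3 * X 1), (X 1 : MvPolynomial (Fin 2) ℤ) ^ 4} := by
  unfold Hideal
  congr 1
  ext p
  constructor
  · rintro (h | ⟨i, rfl⟩)
    · simp only [Set.mem_singleton_iff] at h
      right; rw [h]; rfl
    · left
      have : i = 0 := Subsingleton.elim i 0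
      subst this; rfl
  · rintro (h | h)
    · right; exact ⟨0, by rw [h]; rfl⟩
    · left; simp only [Set.mem_singleton_iff] at h ⊢; rw [h]; rfl

noncomputable def mm (c d : ℕ) : Fin 2 →₀ ℕ := Finsupp.single 0 c + Finsupp.single 1 d

lemma mm_apply0 (c d : ℕ) : mm c d 0 = c := by
  simp [mm, Finsupp.single_apply]

lemma mm_apply1 (c d : ℕ) : mm c d 1 = d := by
  simp [mm, Finsupp.single_apply]

lemma mm_le (c d c' d' : ℕ) : mm c d ≤ mm c' d' ↔ c ≤ c' ∧ d ≤ d' := by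
  rw [Finsupp.le_def]
  constructor
  · intro h
    have h0 := h 0; have h1 := h 1
    rw [mm_apply0, mm_apply0] at h0; rw [mm_apply1, mm_apply1] at h1
    exact ⟨h0, h1⟩
  · rintro ⟨h0, h1⟩
    rw [Fin.forall_fin_two]
    constructor
    · rw [mm_apply0, mm_apply0]; exact h0
    · rw [mm_apply1, mm_apply1]; exact h1

lemma mm_eq (c d c' d' : ℕ) : mm c d = mm c' d' ↔ c = c' ∧ d = d' := by
  constructor
  · intro h
    have h0 := DFunLike.congr_fun h 0
    have h1 := DFunLike.congr_fun h 1
    rw [mm_apply0, mm_apply0] at h0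
    rw [mm_apply1, mm_apply1] at h1
    exact ⟨h0, h1⟩
  · rintro ⟨rfl, rfl⟩; rfl

lemma mono_eq (c d : ℕ) (e : ℤ) :
    (monomial (mm c d) e : MvPolynomial (Fin 2) ℤ) = C e * X 0 ^ c * X 1 ^ d := by
  rw [X_pow_eq_monomial, X_pow_eq_monomial, C_apply, monomial_mul, monomial_mul]
  simp [mm]

lemma key (k : ℕ) (hk : 0 < k) (a b : ℤ)
    (h : (C a * X 0 + C b * X 1 : MvPolynomial (Fin 2) ℤ) ^ 4 ∈ Hideal k 1) : a = 0 := by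
  rw [hideal1_eq, Ideal.mem_span_pair] at h
  obtain ⟨q₀, q₁, hq⟩ := h
  have hexp : (C a * X 0 + C b * X 1 : MvPolynomial (Fin 2) ℤ) ^ 4 =
      monomial (mm 4 0) (a^4) + monomial (mm 3 1) (4*a^3*b) + monomial (mm 2 2) (6*a^2*b^2)
        + monomial (mm 1 3) (4*a*b^3) + monomial (mm 0 4) (b^4) := by
    simp only [mono_eq, map_mul, map_pow, map_ofNat]; ring
  have hg : (X 0 ^ 4 + (k : ℤ) • (X 0 ^ 3 * X 1) : MvPolynomial (Fin 2) ℤ) =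
      monomial (mm 4 0) 1 + monomial (mm 3 1) (k : ℤ) := by
    simp only [mono_eq, zsmul_eq_mul, map_one, C_eq_coe_nat]; push_cast; ring
  have hg1 : ((X 1 : MvPolynomial (Fin 2) ℤ)) ^ 4 = monomial (mm 0 4) 1 := by
    simp only [mono_eq, map_one]; ring
  rw [hexp, hg, hg1] at hq
  have key22 := congrArg (coeff (mm 2 2)) hq
  have key40 := congrArg (coeff (mm 4 0)) hq
  have key31 := congrArg (coeff (mm 3 1)) hq
  simp only [coeff_add, mul_add, coeff_mul_monomial', coeff_monomial, mm_le, mm_eq]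
    at key22 key40 key31
  norm_num at key22 key40 key31
  rcases key22 with h | h
  · exact h
  · subst h
    rw [key40] at key31
    have h0 : a ^ 4 * (k : ℤ) = 0 := by linarith
    have h1 : a ^ 4 = 0 := by
      rcases mul_eq_zero.mp h0 with h | h
      · exact h
      · exact absurd h (by exact_mod_cast hk.ne')
    exact pow_eq_zero_iff (by norm_num) |>.mp h1

lemma ht1_v4 (k : ℕ) : (Ht k 1 1) ^ 4 = 0 := by
  unfold Ht
  rw [← map_pow, Ideal.Quotient.eq_zero_iff_mem, hideal1_eq]
  exact Ideal.subset_span (by right; rfl)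

lemma ht1_u4 (k : ℕ) :
    (Ht k 1 0) ^ 4 + (k : ℤ) • ((Ht k 1 0) ^ 3 * Ht k 1 1) = 0 := by
  unfold Ht
  rw [← map_pow, ← map_pow, ← map_mul, ← map_zsmul, ← map_add,
    Ideal.Quotient.eq_zero_iff_mem, hideal1_eq]
  exact Ideal.subset_span (by left; rfl)

lemma key' (k : ℕ) (hk : 0 < k) (a b : ℤ)
    (h : (a • Ht k 1 0 + b • Ht k 1 1) ^ 4 = 0) : a = 0 := by
  apply key k hk a b
  rw [← Ideal.Quotient.eq_zero_iff_mem, map_pow]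
  have e : Ideal.Quotient.mk (Hideal k 1) (C a * X 0 + C b * X 1) =
      a • Ht k 1 0 + b • Ht k 1 1 := by
    rw [← smul_eq_C_mul, ← smul_eq_C_mul, map_add, map_zsmul, map_zsmul]; rfl
  rw [e]; exact h

noncomputable def fvar (k n : ℕ) (i : Fin n) : Fin (n + 1) → HRing k 1 :=
  fun j => if j = Fin.castSucc i then Ht k 1 0 else if j = i.succ then Ht k 1 1 else 0

lemma aeval_fvar_ideal (k n : ℕ) (i : Fin n) :
    ∀ p ∈ Hideal k n, aeval (fvar k n i) p = 0 := by
  intro p hp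
  have hsub : Hideal k n ≤ RingHom.ker (aeval (fvar k n i)).toRingHom := by
    rw [Hideal, Ideal.span_le]
    rintro g (hg | ⟨j, rfl⟩)
    · simp only [Set.mem_singleton_iff] at hg; subst hg
      simp only [SetLike.mem_coe, RingHom.mem_ker, AlgHom.toRingHom_eq_coe,
        RingHom.coe_coe, map_pow, aeval_X, fvar]
      have h1 : Fin.last n ≠ Fin.castSucc i := by
        have := i.isLt
        rw [Ne, Fin.ext_iff]; simp only [Fin.val_last, Fin.coe_castSucc]; omega
      rw [if_neg h1]
      by_cases h2 : Fin.last n = i.succ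
      · rw [if_pos h2]; exact ht1_v4 k
      · rw [if_neg h2]; simp
    · simp only [SetLike.mem_coe, RingHom.mem_ker, AlgHom.toRingHom_eq_coe,
        RingHom.coe_coe, map_add, map_zsmul, map_mul, map_pow, aeval_X, fvar]
      by_cases hji : j = i
      · subst hji
        rw [if_pos rfl]
        have h1 : j.succ ≠ Fin.castSucc j := by
          rw [Ne, Fin.ext_iff]; simp only [Fin.val_succ, Fin.coe_castSucc]; omega
        rw [if_neg h1, if_pos rfl]
        exact ht1_u4 k
      · have hcc : Fin.castSucc j ≠ Fin.castSucc i := by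
          simp only [Ne, Fin.ext_iff, Fin.coe_castSucc] at hji ⊢; exact hji
        rw [if_neg hcc]
        by_cases hcs : Fin.castSucc j = i.succ
        · rw [if_pos hcs]
          have h1 : j.succ ≠ Fin.castSucc i := by
            rw [Fin.ext_iff] at hcs
            simp only [Fin.coe_castSucc, Fin.val_succ] at hcs
            rw [Ne, Fin.ext_iff]; simp only [Fin.val_succ, Fin.coe_castSucc]; omega
          have h2 : j.succ ≠ i.succ := by
            simp only [Ne, Fin.ext_iff, Fin.val_succ] at hji ⊢; omega
          rw [if_neg h1, if_neg h2]
          simp only [mul_zero, smul_zero, add_zero]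
          exact ht1_v4 k
        · rw [if_neg hcs]
          simp
  exact hsub hp

noncomputable def phi (k n : ℕ) (i : Fin n) : HRing k n →+* HRing k 1 :=
  Ideal.Quotient.lift (Hideal k n) (aeval (fvar k n i)).toRingHom (aeval_fvar_ideal k n i)

lemma phi_mk (k n : ℕ) (i : Fin n) (p : MvPolynomial (Fin (n + 1)) ℤ) :
    phi k n i (Ideal.Quotient.mk _ p) = aeval (fvar k n i) p :=
  Ideal.Quotient.lift_mk _ _ _

lemma monomial_single_eq_smul_X {n : ℕ} (j : Fin (n + 1)) (c : ℤ) :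
    (monomial (Finsupp.single j 1) c : MvPolynomial (Fin (n + 1)) ℤ) = c • X j := by
  rw [smul_eq_C_mul]
  show _ = C c * monomial (Finsupp.single j 1) 1
  rw [C_mul_monomial, mul_one]

/- STATEMENT 9 -/
theorem stmt9 (k n : ℕ) (hk : 0 < k) (x : HRing k n)
    (hx : ∃ p : MvPolynomial (Fin (n + 1)) ℤ, p.IsHomogeneous 1 ∧
      x = Ideal.Quotient.mk _ p)
    (h4 : x ^ 4 = 0) :
    ∃ a : ℤ, x = a • Ht k n (Fin.last n) := by
  classical
  obtain ⟨p, hp, rfl⟩ := hx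
  set a : Fin (n + 1) → ℤ := fun j => coeff (Finsupp.single j 1) p with ha
  have hdecomp : p = ∑ j : Fin (n + 1), monomial (Finsupp.single j 1) (a j) := by
    ext m
    rw [coeff_sum]
    by_cases hm : m.degree = 1
    · obtain ⟨j₀, rfl⟩ := degree_one_single m hm
      rw [Finset.sum_eq_single j₀]
      · rw [coeff_monomial, if_pos rfl]
      · intro j _ hj
        rw [coeff_monomial, if_neg]
        intro h
        exact hj ((Finsupp.single_left_inj one_ne_zero).mp h)
      · intro h; exact absurd (Finset.mem_univ _) h
    · rw [hp.coeff_eq_zero hm]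
      symm; apply Finset.sum_eq_zero
      intro j _
      rw [coeff_monomial, if_neg]
      intro h
      exact hm (by rw [← h, degree_single_one])
  have hzero : ∀ i : Fin n, a (Fin.castSucc i) = 0 := by
    intro i
    have h4' : (phi k n i (Ideal.Quotient.mk _ p)) ^ 4 = 0 := by
      rw [← map_pow, h4, map_zero]
    rw [phi_mk] at h4'
    have heval : aeval (fvar k n i) p =
        a (Fin.castSucc i) • Ht k 1 0 + a i.succ • Ht k 1 1 := by
      conv_lhs => rw [hdecomp]
      rw [map_sum]
      have hterm : ∀ j ∈ Finset.univ, (aeval (fvar k n i))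
          ((monomial (Finsupp.single j 1)) (a j)) =
          (if j = Fin.castSucc i then a (Fin.castSucc i) • Ht k 1 0 else 0) +
          (if j = i.succ then a i.succ • Ht k 1 1 else 0) := by
        intro j _
        rw [monomial_single_eq_smul_X, map_zsmul, aeval_X]
        unfold fvar
        by_cases h1 : j = Fin.castSucc i
        · subst h1
          rw [if_pos rfl, if_pos rfl, if_neg, add_zero]
          simp only [Ne, Fin.ext_iff, Fin.coe_castSucc, Fin.val_succ]; omega
        · rw [if_neg h1, if_neg h1]
          by_cases h2 : j = i.succ
          · subst h2; rw [if_pos rfl, if_pos rfl, zero_add]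
          · rw [if_neg h2, if_neg h2, smul_zero, zero_add]
      rw [Finset.sum_congr rfl hterm, Finset.sum_add_distrib,
        Finset.sum_ite_eq' Finset.univ (Fin.castSucc i),
        Finset.sum_ite_eq' Finset.univ i.succ]
      simp
    rw [heval] at h4'
    exact key' k hk _ _ h4'
  refine ⟨a (Fin.last n), ?_⟩
  have hp_last : p = monomial (Finsupp.single (Fin.last n) 1) (a (Fin.last n)) := by
    conv_lhs => rw [hdecomp]
    rw [Finset.sum_eq_single (Fin.last n)]
    · intro j _ hj
      obtain ⟨i, rfl⟩ := Fin.exists_castSucc_eq.mpr hj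
      rw [hzero i, map_zero]
    · intro h; exact absurd (Finset.mem_univ _) h
  rw [hp_last, monomial_single_eq_smul_X, map_zsmul]
  rfl
end

section
/- In H(k,n) = ℤ[t₁,…,t_n]/(t₁⁴+kt₁³t₂, …, t_{n-1}⁴+k t_{n-1}³ t_n, t_n⁴), one has t_i⁴ = 0 if and only if i = n. -/
open MvPolynomial

/- STATEMENT 10: In H(k,n) one has t_i⁴ = 0 if and only if i = n (the last
variable), k a positive integer.  (`HRing k n` has `n+1` variables, i.e. it is
the H(k,n+1) of the paper, n+1 ≥ 1.) -/
private lemma stmt10_aux (k n : ℕ) (hk : 0 < k) (i : Fin (n + 1)) (hne : i ≠ Fin.last n)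
    (hmem : (X i ^ 4 : MvPolynomial (Fin (n + 1)) ℤ) ∈
      Ideal.span ({X (Fin.last n) ^ 4} ∪
        Set.range fun c : Fin n =>
          X (Fin.castSucc c) ^ 4 + (k : ℤ) • (X (Fin.castSucc c) ^ 3 * X c.succ))) :
    False := by
  obtain ⟨c₀, rfl⟩ := Fin.exists_castSucc_eq.mpr hne
  set i := Fin.castSucc c₀ with hi
  set j := c₀.succ with hj
  have hij : i ≠ j := (Fin.castSucc_lt_succ (i := c₀)).ne
  set m1 : Fin (n + 1) →₀ ℕ := Finsupp.single i 4 with hm1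
  set m2 : Fin (n + 1) →₀ ℕ := Finsupp.single i 3 + Finsupp.single j 1 with hm2
  set ψ : MvPolynomial (Fin (n + 1)) ℤ → ℤ :=
    fun q => (k : ℤ) * coeff m1 q - coeff m2 q with hψ
  -- values of m1, m2
  have hm1i : m1 i = 4 := by simp [hm1]
  have hm2i : m2 i = 3 := by
    simp only [hm2, Finsupp.add_apply, Finsupp.single_apply, if_pos rfl,
      if_neg (Ne.symm hij), if_true, add_zero]
  have hm2j : m2 j = 1 := by
    simp only [hm2, Finsupp.add_apply, Finsupp.single_apply, if_neg hij, if_pos rfl,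
      if_true, zero_add]
  have hm1j : m1 j = 0 := by
    rw [hm1, Finsupp.single_apply, if_neg hij]
  have hm1last : m1 (Fin.last n) = 0 := by
    simp [hm1, Finsupp.single_apply, hne]
  have hm2le : ∀ x, m2 x ≤ 3 := by
    intro x
    rw [hm2]
    simp only [Finsupp.add_apply, Finsupp.single_apply]
    rcases eq_or_ne i x with h1 | h1
    · have h2 : ¬ j = x := fun h => (Ne.symm hij) (h.trans h1.symm)
      rw [if_pos h1, if_neg h2]
      omega
    · rw [if_neg h1]
      split <;> omega
  -- the key vanishing lemma
  have key : ∀ p : MvPolynomial (Fin (n + 1)) ℤ, ∀ g ∈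
      ({X (Fin.last n) ^ 4} ∪ Set.range fun c : Fin n =>
        X (Fin.castSucc c) ^ 4 + (k : ℤ) • (X (Fin.castSucc c) ^ 3 * X c.succ) :
        Set (MvPolynomial (Fin (n + 1)) ℤ)), ψ (p * g) = 0 := by
    intro p g hg
    rcases hg with hg | ⟨c, rfl⟩
    · rcases hg with rfl
      have h1 : ¬ Finsupp.single (Fin.last n) 4 ≤ m1 := by
        rw [Finsupp.single_le_iff, hm1last]; omega
      have h2 : ¬ Finsupp.single (Fin.last n) 4 ≤ m2 := by
        rw [Finsupp.single_le_iff]; have := hm2le (Fin.last n); omega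
      simp only [hψ, X_pow_eq_monomial, coeff_mul_monomial', h1, h2, if_neg,
        not_false_iff]
      ring
    · -- generator g_c
      have hXX : (X (Fin.castSucc c) : MvPolynomial (Fin (n + 1)) ℤ) ^ 3 * X c.succ
          = monomial (Finsupp.single (Fin.castSucc c) 3 + Finsupp.single c.succ 1) 1 := by
        rw [X_pow_eq_monomial, X, monomial_mul, one_mul]
      have hcc : (Fin.castSucc c : Fin (n + 1)) ≠ c.succ := (Fin.castSucc_lt_succ (i := c)).ne
      rw [mul_add, mul_smul_comm, hXX, X_pow_eq_monomial]
      simp only [hψ, coeff_add, coeff_smul, coeff_mul_monomial', smul_eq_mul]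
      by_cases hc : (Fin.castSucc c : Fin (n + 1)) = i
      · have hc2 : c = c₀ := Fin.castSucc_injective _ (hc.trans hi)
        have hcj : c.succ = j := by rw [hc2, hj]
        rw [hc, hcj]
        have e1 : Finsupp.single i 4 ≤ m1 := by rw [Finsupp.single_le_iff, hm1i]
        have e2 : ¬ (Finsupp.single i 3 + Finsupp.single j 1 ≤ m1) := by
          intro h
          have h2 : Finsupp.single j 1 ≤ m1 := le_trans le_add_self h
          rw [Finsupp.single_le_iff, hm1j] at h2
          omega
        have e3 : ¬ (Finsupp.single i 4 ≤ m2) := by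
          rw [Finsupp.single_le_iff]; have := hm2le i; omega
        have e4 : Finsupp.single i 3 + Finsupp.single j 1 ≤ m2 := le_of_eq hm2.symm
        rw [if_pos e1, if_neg e2, if_neg e3, if_pos e4]
        have f1 : m1 - Finsupp.single i 4 = 0 := by rw [hm1]; simp
        have f2 : m2 - (Finsupp.single i 3 + Finsupp.single j 1) = 0 := by rw [hm2]; simp
        rw [f1, f2]
        ring
      · have hci : m1 (Fin.castSucc c) = 0 := by
          rw [hm1, Finsupp.single_apply, if_neg (fun h => hc h.symm)]
        have hci2 : m2 (Fin.castSucc c) ≤ 1 := by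
          rw [hm2]
          simp only [Finsupp.add_apply, Finsupp.single_apply,
            if_neg (fun h : i = Fin.castSucc c => hc h.symm)]
          split <;> omega
        have e1 : ¬ (Finsupp.single (Fin.castSucc c) 4 ≤ m1) := by
          rw [Finsupp.single_le_iff, hci]; omega
        have e2 : ¬ (Finsupp.single (Fin.castSucc c) 3 + Finsupp.single c.succ 1 ≤ m1) := by
          intro h
          have h2 : Finsupp.single (Fin.castSucc c) 3 ≤ m1 := le_trans le_self_add h
          rw [Finsupp.single_le_iff, hci] at h2
          omega
        have e3 : ¬ (Finsupp.single (Fin.castSucc c) 4 ≤ m2) := by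
          rw [Finsupp.single_le_iff]; have := hm2le (Fin.castSucc c); omega
        have e4 : ¬ (Finsupp.single (Fin.castSucc c) 3 + Finsupp.single c.succ 1 ≤ m2) := by
          intro h
          have h2 : Finsupp.single (Fin.castSucc c) 3 ≤ m2 := le_trans le_self_add h
          rw [Finsupp.single_le_iff] at h2
          omega
        rw [if_neg e1, if_neg e2, if_neg e3, if_neg e4]
        ring
  -- ψ is additive and kills 0
  have ψ0 : ψ 0 = 0 := by simp [hψ]
  have ψadd : ∀ a b, ψ (a + b) = ψ a + ψ b := by
    intro a b; simp only [hψ, coeff_add]; ring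
  -- prove ∀ x ∈ span, ∀ p, ψ (p * x) = 0
  have main : ∀ p, ψ (p * X i ^ 4) = 0 := by
    refine Submodule.span_induction
      (p := fun x _ => ∀ p, ψ (p * x) = 0) ?_ ?_ ?_ ?_ hmem
    · intro x hx p; exact key p x hx
    · intro p; rw [mul_zero]; exact ψ0
    · intro x y _ _ hx hy p; rw [mul_add, ψadd, hx, hy, add_zero]
    · intro a x _ hx p
      rw [smul_eq_mul, ← mul_assoc]; exact hx (p * a)
  have := main 1
  rw [one_mul] at this
  -- compute ψ (X i ^ 4) = k
  have c1 : coeff m1 (X i ^ 4 : MvPolynomial (Fin (n + 1)) ℤ) = 1 := by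
    rw [hm1, X_pow_eq_monomial, coeff_monomial, if_pos rfl]
  have c2 : coeff m2 (X i ^ 4 : MvPolynomial (Fin (n + 1)) ℤ) = 0 := by
    rw [X_pow_eq_monomial, coeff_monomial, if_neg]
    intro h
    have h3 : (Finsupp.single i 4 : Fin (n + 1) →₀ ℕ) i = m2 i := by rw [h]
    rw [Finsupp.single_eq_same, hm2i] at h3
    omega
  rw [hψ] at this
  simp only [c1, c2] at this
  omega

theorem stmt10 (k n : ℕ) (hk : 0 < k) (i : Fin (n + 1)) :
    Ht k n i ^ 4 = 0 ↔ i = Fin.last n := by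
  have hpow : Ht k n i ^ 4 = Ideal.Quotient.mk (Hideal k n) (X i ^ 4) := by
    rw [Ht, map_pow]
  rw [hpow, Ideal.Quotient.eq_zero_iff_mem]
  constructor
  · intro h
    by_contra hne
    rw [Hideal] at h
    exact stmt10_aux k n hk i hne h
  · rintro rfl
    rw [Hideal]
    exact Ideal.subset_span (Or.inl rfl)
end

section
/- Every graded algebra isomorphism f : H(k,n) → H(l,n) satisfies f(t_n) = ± t_n. -/
open MvPolynomial

/-! ### Auxiliary lemmas -/

lemma key2 (k : ℕ) (hk : 0 < k) (c c' : ℤ)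
    (h : ((Polynomial.C (Polynomial.C c * Polynomial.X) + Polynomial.C (Polynomial.C c') * Polynomial.X : Polynomial (Polynomial ℤ))) ^ 4 ∈
      Ideal.span {(Polynomial.C (Polynomial.X ^ 4) + Polynomial.C (Polynomial.C (k : ℤ) * Polynomial.X ^ 3) * Polynomial.X ^ 1 : Polynomial (Polynomial ℤ)),
        (Polynomial.X : Polynomial (Polynomial ℤ)) ^ 4}) : c = 0 := by
  rw [Ideal.mem_span_pair] at h
  obtain ⟨p, q, hpq⟩ := h
  have hexp : ((Polynomial.C (Polynomial.C c * Polynomial.X) + Polynomial.C (Polynomial.C c') * Polynomial.X : Polynomial (Polynomial ℤ))) ^ 4 =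
      Polynomial.C (Polynomial.C (c ^ 4) * Polynomial.X ^ 4) + Polynomial.C (Polynomial.C (4 * c ^ 3 * c') * Polynomial.X ^ 3) * Polynomial.X ^ 1
      + Polynomial.C (Polynomial.C (6 * c ^ 2 * c' ^ 2) * Polynomial.X ^ 2) * Polynomial.X ^ 2
      + Polynomial.C (Polynomial.C (4 * c * c' ^ 3) * Polynomial.X ^ 1) * Polynomial.X ^ 3 + Polynomial.C (Polynomial.C (c' ^ 4)) * Polynomial.X ^ 4 := by
    simp only [map_mul, map_add, map_pow, map_ofNat]
    ring
  rw [hexp] at hpq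
  have h0 := congrArg (fun P => Polynomial.coeff (Polynomial.coeff P 0) 4) hpq
  have h1 := congrArg (fun P => Polynomial.coeff (Polynomial.coeff P 1) 3) hpq
  have h2 := congrArg (fun P => Polynomial.coeff (Polynomial.coeff P 2) 2) hpq
  simp only [mul_add, ← mul_assoc, Polynomial.coeff_add, Polynomial.coeff_mul_C,
    Polynomial.coeff_mul_X_pow', Polynomial.coeff_C, Polynomial.coeff_C_mul,
    Polynomial.coeff_X_pow, Nat.reduceLeDiff, Nat.reduceEqDiff, reduceIte,
    Nat.reduceSub, if_true, if_false, mul_one, mul_zero, zero_mul, add_zero, zero_add,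
    one_ne_zero, Nat.one_ne_zero] at h0 h1 h2
  have hcc : c * c' = 0 := by nlinarith
  have h4 : c ^ 4 * (k : ℤ) = 0 := by rw [← h0, h1]; linear_combination (4 * c ^ 2) * hcc
  have hc4 : c ^ 4 = 0 := by
    rcases mul_eq_zero.1 h4 with h | h
    · exact h
    · exact absurd h (by exact_mod_cast hk.ne')
  exact pow_eq_zero_iff (by norm_num) |>.1 hc4

lemma deg_one_single {σ : Type*} {m : σ →₀ ℕ} (hm : Finsupp.degree m = 1) :
    ∃ j, m = Finsupp.single j 1 := by
  classical
  have hsum : ∑ i ∈ m.support, m i = 1 := hm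
  have hcard : m.support.card ≤ 1 := by
    by_contra hc
    have h2 : 2 ≤ m.support.card := by omega
    have hle := Finset.card_nsmul_le_sum m.support m 1
      (fun i hi => Nat.one_le_iff_ne_zero.2 (Finsupp.mem_support_iff.1 hi))
    simp only [smul_eq_mul, mul_one] at hle
    exact absurd (hle.trans_eq hsum) (by omega)
  have hne : m.support.Nonempty := by
    rw [Finsupp.support_nonempty_iff]
    rintro rfl
    simp at hsum
  obtain ⟨j, hj⟩ := Finset.card_eq_one.1 (le_antisymm hcard hne.card_pos)
  obtain ⟨-, hm'⟩ := Finsupp.support_eq_singleton.1 hj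
  have hmj : m j = 1 := by rw [hj, Finset.sum_singleton] at hsum; exact hsum
  exact ⟨j, by rw [hm', hmj]⟩

lemma rep {n : ℕ} {y : MvPolynomial (Fin (n + 1)) ℤ} (hy : y.IsHomogeneous 1) :
    y = ∑ j : Fin (n + 1), C (coeff (Finsupp.single j 1) y) * X j := by
  apply MvPolynomial.ext
  intro m
  rw [coeff_sum]
  by_cases hm : ∃ j, m = Finsupp.single j 1
  · obtain ⟨j, rfl⟩ := hm
    rw [Finset.sum_eq_single j]
    · rw [coeff_C_mul, coeff_X, if_pos rfl, mul_one]
    · intro b _ hb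
      rw [coeff_C_mul, coeff_X', if_neg, mul_zero]
      intro hcon
      exact hb ((Finsupp.single_left_inj one_ne_zero).1 hcon)
    · simp
  · rw [hy.coeff_eq_zero]
    · symm
      refine Finset.sum_eq_zero fun j _ => ?_
      rw [coeff_C_mul, coeff_X', if_neg, mul_zero]
      exact fun hcon => hm ⟨j, hcon.symm⟩
    · intro hdeg
      obtain ⟨j, rfl⟩ := deg_one_single hdeg
      exact hm ⟨j, rfl⟩

/-- The evaluation sending t_i ↦ u, t_{i+1} ↦ v, others ↦ 0. -/
noncomputable def vm {n : ℕ} (i : Fin n) (j : Fin (n + 1)) : Polynomial (Polynomial ℤ) :=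
  if j = Fin.castSucc i then Polynomial.C Polynomial.X
  else if j = i.succ then Polynomial.X else 0

lemma vm_castSucc {n : ℕ} (i : Fin n) : vm i (Fin.castSucc i) = Polynomial.C Polynomial.X :=
  if_pos rfl

lemma vm_succ {n : ℕ} (i : Fin n) : vm i i.succ = Polynomial.X := by
  rw [vm, if_neg, if_pos rfl]
  simp only [ne_eq, Fin.ext_iff, Fin.val_succ, Fin.coe_castSucc]; omega

lemma vm_other {n : ℕ} (i : Fin n) (j : Fin (n + 1)) (h1 : j ≠ Fin.castSucc i)
    (h2 : j ≠ i.succ) : vm i j = 0 := by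
  rw [vm, if_neg h1, if_neg h2]

lemma pow4_map_mem {k n : ℕ} (i : Fin n) {y : MvPolynomial (Fin (n + 1)) ℤ}
    (h4 : y ^ 4 ∈ Hideal k n) :
    (MvPolynomial.aeval (vm i)) (y ^ 4) ∈
    Ideal.span {(Polynomial.C (Polynomial.X ^ 4) +
        Polynomial.C (Polynomial.C (k : ℤ) * Polynomial.X ^ 3) * Polynomial.X ^ 1 :
        Polynomial (Polynomial ℤ)),
      (Polynomial.X : Polynomial (Polynomial ℤ)) ^ 4} := by
  let φ : MvPolynomial (Fin (n + 1)) ℤ →ₐ[ℤ] Polynomial (Polynomial ℤ) :=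
    MvPolynomial.aeval (vm i)
  have h1 : (MvPolynomial.aeval (vm i)) (y ^ 4) ∈
      Ideal.map φ.toRingHom (Hideal k n) :=
    Ideal.mem_map_of_mem _ h4
  rw [Hideal, Ideal.map_span] at h1
  refine Ideal.span_le.2 ?_ h1
  rintro z ⟨w, hw, rfl⟩
  rw [SetLike.mem_coe]
  rcases hw with hw | ⟨j, rfl⟩
  · rw [Set.mem_singleton_iff] at hw; subst hw
    have hne : Fin.last n ≠ Fin.castSucc i := (Fin.castSucc_lt_last i).ne'
    by_cases hls : Fin.last n = i.succ
    · have : φ.toRingHom (X (Fin.last n) ^ 4) =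
          (Polynomial.X : Polynomial (Polynomial ℤ)) ^ 4 := by
        rw [AlgHom.toRingHom_eq_coe, RingHom.coe_coe, map_pow, aeval_X, hls, vm_succ]
      rw [this]
      exact Ideal.subset_span (Set.mem_insert_iff.2 (Or.inr rfl))
    · have : φ.toRingHom (X (Fin.last n) ^ 4) = 0 := by
        rw [AlgHom.toRingHom_eq_coe, RingHom.coe_coe, map_pow, aeval_X,
          vm_other i _ hne hls]
        norm_num
      rw [this]
      exact Ideal.zero_mem _
  · by_cases hji : j = i
    · subst hji
      have hsc : j.succ ≠ Fin.castSucc j := by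
        simp only [ne_eq, Fin.ext_iff, Fin.val_succ, Fin.coe_castSucc]; omega
      have : φ.toRingHom
          (X (Fin.castSucc j) ^ 4 + (k : ℤ) • (X (Fin.castSucc j) ^ 3 * X j.succ)) =
          Polynomial.C (Polynomial.X ^ 4) +
            Polynomial.C (Polynomial.C (k : ℤ) * Polynomial.X ^ 3) * Polynomial.X ^ 1 := by
        rw [AlgHom.toRingHom_eq_coe, RingHom.coe_coe, map_add, map_pow, map_smul, map_mul,
          map_pow, aeval_X, aeval_X, vm_castSucc, vm_succ]
        simp only [zsmul_eq_mul, map_mul, map_pow, Polynomial.C_eq_natCast, map_natCast,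
          Int.cast_natCast]
        ring
      rw [this]
      exact Ideal.subset_span (Set.mem_insert_iff.2 (Or.inl rfl))
    · have h2 : Fin.castSucc j ≠ Fin.castSucc i := fun h => hji (Fin.castSucc_injective _ h)
      by_cases h3 : Fin.castSucc j = i.succ
      · have h4' : j.succ ≠ Fin.castSucc i := by
          simp only [ne_eq, Fin.ext_iff, Fin.val_succ, Fin.coe_castSucc] at h3 ⊢; omega
        have h5 : j.succ ≠ i.succ := by
          simp only [ne_eq, Fin.ext_iff, Fin.val_succ, Fin.coe_castSucc] at h3 ⊢; omega
        have : φ.toRingHom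
            (X (Fin.castSucc j) ^ 4 + (k : ℤ) • (X (Fin.castSucc j) ^ 3 * X j.succ)) =
            (Polynomial.X : Polynomial (Polynomial ℤ)) ^ 4 := by
          rw [AlgHom.toRingHom_eq_coe, RingHom.coe_coe, map_add, map_pow, map_smul, map_mul,
            map_pow, aeval_X, aeval_X, h3, vm_succ, vm_other i _ h4' h5]
          simp
        rw [this]
        exact Ideal.subset_span (Set.mem_insert_iff.2 (Or.inr rfl))
      · have : φ.toRingHom
            (X (Fin.castSucc j) ^ 4 + (k : ℤ) • (X (Fin.castSucc j) ^ 3 * X j.succ)) = 0 := by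
          rw [AlgHom.toRingHom_eq_coe, RingHom.coe_coe, map_add, map_pow, map_smul, map_mul,
            map_pow, aeval_X, aeval_X, vm_other i _ h2 h3]
          simp
        rw [this]
        exact Ideal.zero_mem _

lemma coeff_castSucc_eq_zero {k n : ℕ} (hk : 0 < k) {y : MvPolynomial (Fin (n + 1)) ℤ}
    (hy : y.IsHomogeneous 1) (h4 : y ^ 4 ∈ Hideal k n) (i : Fin n) :
    coeff (Finsupp.single (Fin.castSucc i) 1) y = 0 := by
  set c := coeff (Finsupp.single (Fin.castSucc i) 1) y with hc
  set c' := coeff (Finsupp.single i.succ 1) y with hc'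
  apply key2 k hk c c'
  have hmem := pow4_map_mem i h4
  have hφy : (MvPolynomial.aeval (vm i)) y =
      Polynomial.C (Polynomial.C c * Polynomial.X) +
        Polynomial.C (Polynomial.C c') * Polynomial.X := by
    conv_lhs => rw [rep hy]
    rw [map_sum, ← Finset.sum_subset (Finset.subset_univ {Fin.castSucc i, i.succ})]
    · have hne : Fin.castSucc i ∉ ({i.succ} : Finset (Fin (n + 1))) := by
        simp only [Finset.mem_singleton, Fin.ext_iff, Fin.coe_castSucc, Fin.val_succ]
        omega
      rw [Finset.sum_insert hne, Finset.sum_singleton, map_mul, map_mul, aeval_X, aeval_X,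
        vm_castSucc, vm_succ, aeval_C, aeval_C]
      simp only [algebraMap_int_eq, eq_intCast, map_mul, Polynomial.C_eq_intCast,
        map_intCast]
      rfl
    · intro j _ hj
      simp only [Finset.mem_insert, Finset.mem_singleton, not_or] at hj
      rw [map_mul, aeval_X, vm_other i j hj.1 hj.2, mul_zero]
  have hmem' : ((MvPolynomial.aeval (vm i)) y) ^ 4 ∈
      Ideal.span {(Polynomial.C (Polynomial.X ^ 4) +
        Polynomial.C (Polynomial.C (k : ℤ) * Polynomial.X ^ 3) * Polynomial.X ^ 1 :
        Polynomial (Polynomial ℤ)),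
      (Polynomial.X : Polynomial (Polynomial ℤ)) ^ 4} := by
    rw [← map_pow]; exact hmem
  rw [hφy] at hmem'
  exact hmem' 

lemma eq_C_mul_X_last {k n : ℕ} (hk : 0 < k) {y : MvPolynomial (Fin (n + 1)) ℤ}
    (hy : y.IsHomogeneous 1) (h4 : y ^ 4 ∈ Hideal k n) :
    y = C (coeff (Finsupp.single (Fin.last n) 1) y) * X (Fin.last n) := by
  conv_lhs => rw [rep hy]
  rw [Finset.sum_eq_single (Fin.last n)]
  · intro b _ hb
    obtain ⟨i, rfl⟩ := Fin.exists_castSucc_eq.2 hb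
    rw [coeff_castSucc_eq_zero hk hy h4 i, map_zero, zero_mul]
  · simp

lemma C_mul_X_last_mem {l n : ℕ} {e : ℤ}
    (h : (C e * X (Fin.last n) : MvPolynomial (Fin (n + 1)) ℤ) ∈ Hideal l n) : e = 0 := by
  let ψ : MvPolynomial (Fin (n + 1)) ℤ →ₐ[ℤ] Polynomial ℤ :=
    MvPolynomial.aeval (fun j => if j = Fin.last n then Polynomial.X else 0)
  have h1 : ψ.toRingHom (C e * X (Fin.last n)) ∈ Ideal.map ψ.toRingHom (Hideal l n) :=
    Ideal.mem_map_of_mem _ h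
  rw [Hideal, Ideal.map_span] at h1
  have h2 : Ideal.span (ψ.toRingHom '' ({X (Fin.last n) ^ 4} ∪
      Set.range fun i : Fin n =>
        X (Fin.castSucc i) ^ 4 + (l : ℤ) • (X (Fin.castSucc i) ^ 3 * X i.succ))) ≤
      Ideal.span {(Polynomial.X : Polynomial ℤ) ^ 4} := by
    refine Ideal.span_le.2 ?_
    rintro z ⟨w, hw, rfl⟩
    rw [SetLike.mem_coe]
    rcases hw with hw | ⟨j, rfl⟩
    · rw [Set.mem_singleton_iff] at hw; subst hw
      have : ψ.toRingHom (X (Fin.last n) ^ 4) = (Polynomial.X : Polynomial ℤ) ^ 4 := by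
        rw [AlgHom.toRingHom_eq_coe, RingHom.coe_coe, map_pow, aeval_X, if_pos rfl]
      rw [this]
      exact Ideal.subset_span rfl
    · have hne : Fin.castSucc j ≠ Fin.last n := (Fin.castSucc_lt_last j).ne
      have : ψ.toRingHom
          (X (Fin.castSucc j) ^ 4 + (l : ℤ) • (X (Fin.castSucc j) ^ 3 * X j.succ)) = 0 := by
        rw [AlgHom.toRingHom_eq_coe, RingHom.coe_coe, map_add, map_pow, map_smul, map_mul,
          map_pow, aeval_X, aeval_X, if_neg hne]
        simp
      rw [this]
      exact Ideal.zero_mem _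
  have h3 := h2 h1
  have hψ : ψ.toRingHom (C e * X (Fin.last n)) = Polynomial.C e * Polynomial.X := by
    rw [AlgHom.toRingHom_eq_coe, RingHom.coe_coe, map_mul, aeval_X, if_pos rfl, aeval_C]
    simp
  rw [hψ, Ideal.mem_span_singleton] at h3
  obtain ⟨t, ht⟩ := h3
  have := congrArg (fun P => Polynomial.coeff P 1) ht
  simp only [Polynomial.coeff_C_mul, Polynomial.coeff_X_one, mul_one] at this
  rw [show (Polynomial.X : Polynomial ℤ) ^ 4 * t = t * Polynomial.X ^ 4 from mul_comm _ _,
    Polynomial.coeff_mul_X_pow'] at this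
  simpa using this

/- STATEMENT 12: Every graded algebra isomorphism f : H(k,n) → H(l,n)
satisfies f(t_n) = ± t_n.  (k, l positive integers; `HRing k n` has `n+1`
variables, covering all n ≥ 1 of the paper.) -/
theorem stmt12 (k l n : ℕ) (hk : 0 < k) (hl : 0 < l)
    (f : HRing k n ≃+* HRing l n) (hf : IsGradedIso f) :
    f (Ht k n (Fin.last n)) = Ht l n (Fin.last n) ∨
      f (Ht k n (Fin.last n)) = -Ht l n (Fin.last n) := by
  obtain ⟨hf1, hf2⟩ := hf
  obtain ⟨y, hy, hyf'⟩ := hf1 1 (X (Fin.last n)) (isHomogeneous_X _ _)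
  obtain ⟨z, hz, hzf'⟩ := hf2 1 (X (Fin.last n)) (isHomogeneous_X _ _)
  have hyf : f ((Ideal.Quotient.mk (Hideal k n)) (X (Fin.last n))) =
      Ideal.Quotient.mk (Hideal l n) y := hyf'
  have hzf : f.symm ((Ideal.Quotient.mk (Hideal l n)) (X (Fin.last n))) =
      Ideal.Quotient.mk (Hideal k n) z := hzf' 
  have htk4 : (Ideal.Quotient.mk (Hideal k n) (X (Fin.last n))) ^ 4 = 0 := by
    rw [← map_pow, Ideal.Quotient.eq_zero_iff_mem]
    exact Ideal.subset_span (Or.inl rfl)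
  have htl4 : (Ideal.Quotient.mk (Hideal l n) (X (Fin.last n))) ^ 4 = 0 := by
    rw [← map_pow, Ideal.Quotient.eq_zero_iff_mem]
    exact Ideal.subset_span (Or.inl rfl)
  have hy4 : y ^ 4 ∈ Hideal l n := by
    rw [← Ideal.Quotient.eq_zero_iff_mem, map_pow, ← hyf, ← map_pow, htk4, map_zero]
  have hz4 : z ^ 4 ∈ Hideal k n := by
    rw [← Ideal.Quotient.eq_zero_iff_mem, map_pow, ← hzf, ← map_pow, htl4, map_zero]
  set c := coeff (Finsupp.single (Fin.last n) 1) y with hcdef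
  set d := coeff (Finsupp.single (Fin.last n) 1) z with hddef
  have hyc : y = C c * X (Fin.last n) := eq_C_mul_X_last hl hy hy4
  have hzd : z = C d * X (Fin.last n) := eq_C_mul_X_last hk hz hz4
  -- f t = c • t
  have hft : f (Ht k n (Fin.last n)) = (c : HRing l n) * Ht l n (Fin.last n) := by
    rw [Ht, hyf, hyc, map_mul, Ht,
      show (C c : MvPolynomial (Fin (n + 1)) ℤ) = (c : MvPolynomial (Fin (n + 1)) ℤ) from
        by simp, map_intCast]
  have hgt : f.symm (Ht l n (Fin.last n)) = (d : HRing k n) * Ht k n (Fin.last n) := by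
    rw [Ht, hzf, hzd, map_mul, Ht,
      show (C d : MvPolynomial (Fin (n + 1)) ℤ) = (d : MvPolynomial (Fin (n + 1)) ℤ) from
        by simp, map_intCast]
  have hfix : Ht l n (Fin.last n) = ((d * c : ℤ) : HRing l n) * Ht l n (Fin.last n) := by
    conv_lhs => rw [← f.apply_symm_apply (Ht l n (Fin.last n)), hgt, map_mul, map_intCast,
      hft]
    push_cast
    ring
  have hdc : d * c = 1 := by
    have hmem : (C (1 - d * c) * X (Fin.last n) : MvPolynomial (Fin (n + 1)) ℤ) ∈
        Hideal l n := by
      rw [← Ideal.Quotient.eq_zero_iff_mem, map_mul]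
      have : (Ideal.Quotient.mk (Hideal l n)) (C (1 - d * c)) =
          ((1 - d * c : ℤ) : HRing l n) := by
        rw [show (C (1 - d * c) : MvPolynomial (Fin (n + 1)) ℤ) =
          ((1 - d * c : ℤ) : MvPolynomial (Fin (n + 1)) ℤ) from by simp, map_intCast]
      rw [this]
      push_cast at hfix ⊢
      rw [sub_mul, one_mul, sub_eq_zero,
        show (Ideal.Quotient.mk (Hideal l n)) (X (Fin.last n)) = Ht l n (Fin.last n) from rfl]
      exact hfix
    have := C_mul_X_last_mem hmem
    omega
  rcases Int.eq_one_or_neg_one_of_mul_eq_one' hdc with ⟨-, hc1⟩ | ⟨-, hc1⟩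
  · left; rw [hft, hc1]; push_cast; ring
  · right; rw [hft, hc1]; push_cast; ring
end

section
/- For positive integers k, l and n ≥ 2, the graded rings H(k,2) and H(l,2) are isomorphic if and only if k = l. More precisely, if f : H(k,2) → H(l,2) is a graded ring isomorphism, then writing f(t₁) = ε₁(t₁ + c t₂), f(t₂) = ε₂ t₂ with ε₁,ε₂ ∈ {±1}, c ∈ ℤ, the relation f(t₁⁴ + k t₁³t₂) = 0 forces c = 0 and k = l. -/
open MvPolynomial

/- STATEMENT 14: For positive integers k, l, the graded rings H(k,2) and
H(l,2) are isomorphic iff k = l; more precisely, if f : H(k,2) → H(l,2) is a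
graded ring isomorphism with f(t₁) = ε₁(t₁ + c t₂) and f(t₂) = ε₂ t₂,
ε₁,ε₂ ∈ {±1}, c ∈ ℤ, then c = 0 and k = l.  (H(k,2) of the paper is
`HRing k 1`, with variables t₁ = `Ht k 1 0`, t₂ = `Ht k 1 1`.) -/
namespace Stmt14Aux


noncomputable def e (a b : ℕ) : Fin 2 →₀ ℕ := Finsupp.single 0 a + Finsupp.single 1 b

@[simp] lemma e_apply0 (a b : ℕ) : e a b 0 = a := by simp [e]
@[simp] lemma e_apply1 (a b : ℕ) : e a b 1 = b := by simp [e, Finsupp.single_apply]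

lemma finsupp_eq_e (d : Fin 2 →₀ ℕ) : d = e (d 0) (d 1) := by
  ext i; fin_cases i <;> simp

lemma e_inj {a b a' b' : ℕ} : e a b = e a' b' ↔ a = a' ∧ b = b' := by
  constructor
  · intro h
    exact ⟨by rw [← e_apply0 a b, h, e_apply0], by rw [← e_apply1 a b, h, e_apply1]⟩
  · rintro ⟨rfl, rfl⟩; rfl

lemma e_le {a b a' b' : ℕ} : e a b ≤ e a' b' ↔ a ≤ a' ∧ b ≤ b' := by
  rw [Finsupp.le_def]
  constructor
  · intro h; exact ⟨by simpa using h 0, by simpa using h 1⟩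
  · rintro ⟨h1, h2⟩ i; fin_cases i <;> simpa

lemma e_sub (a b a' b' : ℕ) : e a b - e a' b' = e (a - a') (b - b') := by
  ext i; fin_cases i <;> simp [Finsupp.tsub_apply]

lemma e_add (a b a' b' : ℕ) : e a b + e a' b' = e (a + a') (b + b') := by
  ext i; fin_cases i <;> simp

lemma degree_fin2 (d : Fin 2 →₀ ℕ) : d.degree = d 0 + d 1 := by
  rw [Finsupp.degree_apply,
    Finset.sum_subset (Finset.subset_univ _)
      (fun i _ hi => Finsupp.notMem_support_iff.mp hi), Fin.sum_univ_two]

lemma monomial_e (a b : ℕ) (r : ℤ) :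
    (monomial (e a b) r : MvPolynomial (Fin 2) ℤ) = C r * X 0 ^ a * X 1 ^ b := by
  rw [X_pow_eq_monomial, X_pow_eq_monomial, C_apply, monomial_mul, monomial_mul]
  simp [e]

lemma coeff_e_monomial (a b a' b' : ℕ) (r : ℤ) :
    coeff (e a b) (monomial (e a' b') r : MvPolynomial (Fin 2) ℤ) =
      if a' = a ∧ b' = b then r else 0 := by
  rw [coeff_monomial]
  simp [e_inj]

lemma Hideal_one (l : ℕ) :
    Hideal l 1 = Ideal.span {(monomial (e 0 4) 1 : MvPolynomial (Fin 2) ℤ),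
      monomial (e 4 0) 1 + monomial (e 3 1) (l : ℤ)} := by
  unfold Hideal
  congr 1
  rw [Set.range_unique, Set.singleton_union]
  congr 1
  · rw [monomial_e]; norm_num
    rfl
  · congr 1
    rw [monomial_e, monomial_e]
    show (X 0 : MvPolynomial (Fin 2) ℤ) ^ 4 + (l:ℤ) • (X 0 ^ 3 * X 1) = _
    rw [smul_eq_C_mul]; simp only [C_1, pow_zero, mul_one, one_mul]; ring

lemma mem_coeffs {l : ℕ} {p : MvPolynomial (Fin 2) ℤ} (hp : p ∈ Hideal l 1) :
    coeff (e 2 2) p = 0 ∧ coeff (e 1 3) p = 0 ∧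
    coeff (e 3 1) p = l * coeff (e 4 0) p ∧
    coeff (e 1 0) p = 0 ∧ coeff (e 0 1) p = 0 := by
  rw [Hideal_one] at hp
  obtain ⟨u, v, huv⟩ := Ideal.mem_span_pair.mp hp
  subst huv
  refine ⟨?_, ?_, ?_, ?_, ?_⟩ <;>
    simp [mul_add, coeff_mul_monomial', e_le, e_sub, mul_comm]


lemma expand1 (a b : ℤ) :
    ((C a * X 0 + C b * X 1 : MvPolynomial (Fin 2) ℤ)) ^ 4 =
      monomial (e 4 0) (a ^ 4) + monomial (e 3 1) (4 * a ^ 3 * b) +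
      monomial (e 2 2) (6 * a ^ 2 * b ^ 2) + monomial (e 1 3) (4 * a * b ^ 3) +
      monomial (e 0 4) (b ^ 4) := by
  simp only [monomial_e, map_mul, map_pow, map_ofNat]
  ring

lemma expand2 (A s c kk : ℤ) :
    ((A • (X 0 + c • X 1) : MvPolynomial (Fin 2) ℤ)) ^ 4 +
      kk • ((A • (X 0 + c • X 1)) ^ 3 * (s • X 1)) =
      monomial (e 4 0) (A ^ 4) +
      monomial (e 3 1) (4 * A ^ 4 * c + kk * A ^ 3 * s) +
      monomial (e 2 2) (6 * A ^ 4 * c ^ 2 + 3 * kk * A ^ 3 * s * c) +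
      monomial (e 1 3) (4 * A ^ 4 * c ^ 3 + 3 * kk * A ^ 3 * s * c ^ 2) +
      monomial (e 0 4) (A ^ 4 * c ^ 4 + kk * A ^ 3 * s * c ^ 3) := by
  simp only [smul_eq_C_mul, monomial_e, map_mul, map_pow, map_add, map_ofNat]
  ring

lemma homog1 {y : MvPolynomial (Fin 2) ℤ} (hy : y.IsHomogeneous 1) :
    y = C (coeff (e 1 0) y) * X 0 + C (coeff (e 0 1) y) * X 1 := by
  have h10 : Finsupp.single (0 : Fin 2) 1 = e 1 0 := by ext i; fin_cases i <;> simp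
  have h01 : Finsupp.single (1 : Fin 2) 1 = e 0 1 := by
    ext i; fin_cases i <;> simp [Finsupp.single_apply]
  ext m
  obtain ⟨a, b, rfl⟩ : ∃ a b, m = e a b := ⟨m 0, m 1, finsupp_eq_e m⟩
  rw [coeff_add, coeff_C_mul, coeff_C_mul, coeff_X', coeff_X', h10, h01]
  by_cases ha : a = 1 ∧ b = 0
  · obtain ⟨rfl, rfl⟩ := ha; simp [e_inj]
  · by_cases hb : a = 0 ∧ b = 1
    · obtain ⟨rfl, rfl⟩ := hb; simp [e_inj]
    · have h0 : coeff (e a b) y = 0 := by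
        apply hy.coeff_eq_zero
        rw [degree_fin2]; simp; omega
      rw [h0, if_neg, if_neg] <;> simp [e_inj] <;> omega

lemma lin_coeffs (a b : ℤ) :
    coeff (e 1 0) (C a * X 0 + C b * X 1 : MvPolynomial (Fin 2) ℤ) = a ∧
    coeff (e 0 1) (C a * X 0 + C b * X 1 : MvPolynomial (Fin 2) ℤ) = b := by
  have h10 : Finsupp.single (0 : Fin 2) 1 = e 1 0 := by ext i; fin_cases i <;> simp
  have h01 : Finsupp.single (1 : Fin 2) 1 = e 0 1 := by
    ext i; fin_cases i <;> simp [Finsupp.single_apply]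
  constructor <;>
    · rw [coeff_add, coeff_C_mul, coeff_C_mul, coeff_X', coeff_X', h10, h01]
      simp [e_inj]

lemma mk_lin_inj {l : ℕ} {a b : ℤ}
    (h : Ideal.Quotient.mk (Hideal l 1) (C a * X 0 + C b * X 1) = 0) :
    a = 0 ∧ b = 0 := by
  have hm := Ideal.Quotient.eq_zero_iff_mem.mp h
  obtain ⟨-, -, -, h4, h5⟩ := mem_coeffs hm
  rw [(lin_coeffs a b).1] at h4
  rw [(lin_coeffs a b).2] at h5
  exact ⟨h4, h5⟩

lemma key {l k : ℕ} {A s c : ℤ} (hA : A ^ 2 = 1) (hs : s ^ 2 = 1)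
    (hmem : ((A • (X 0 + c • X 1) : MvPolynomial (Fin 2) ℤ)) ^ 4 +
      (k : ℤ) • ((A • (X 0 + c • X 1)) ^ 3 * (s • X 1)) ∈ Hideal l 1) :
    c = 0 ∧ (k : ℤ) * (A * s) = l := by
  obtain ⟨h22, h13, h31, -, -⟩ := mem_coeffs hmem
  rw [expand2] at h22 h13 h31
  simp only [coeff_add, coeff_e_monomial] at h22 h13 h31
  norm_num at h22 h13 h31
  have hA4 : A ^ 4 = 1 := by nlinarith
  have hA3 : A ^ 3 = A := by nlinarith
  rw [hA4, hA3] at h22 h13 h31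
  have hc3 : (2 : ℤ) * c ^ 3 = 0 := by linear_combination c * h22 - h13
  have hc : c = 0 := by
    have : c ^ 3 = 0 := by omega
    exact pow_eq_zero_iff (by norm_num) |>.mp this
  subst hc
  refine ⟨rfl, ?_⟩
  linear_combination h31

lemma y2_a_zero {l : ℕ} (hl : 0 < l) {a b : ℤ}
    (hmem : ((C a * X 0 + C b * X 1 : MvPolynomial (Fin 2) ℤ)) ^ 4 ∈ Hideal l 1) :
    a = 0 := by
  obtain ⟨h22, h13, h31, -, -⟩ := mem_coeffs hmem
  rw [expand1] at h22 h13 h31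
  simp only [coeff_add, coeff_e_monomial] at h22 h13 h31
  norm_num at h22 h13 h31
  rcases h22 with h | h
  · exact h
  · subst h
    have : (l : ℤ) * a ^ 4 = 0 := by linear_combination -h31
    have h4 : a ^ 4 = 0 := by
      rcases mul_eq_zero.mp this with h' | h'
      · exact absurd h' (by exact_mod_cast hl.ne')
      · exact h'
    exact pow_eq_zero_iff (by norm_num) |>.mp h4


lemma hgen_mem (k : ℕ) :
    (X 0 ^ 4 + (k : ℤ) • (X 0 ^ 3 * X 1) : MvPolynomial (Fin 2) ℤ) ∈ Hideal k 1 := by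
  apply Ideal.subset_span
  right
  exact ⟨0, rfl⟩

lemma hX14_mem (k : ℕ) : (X 1 ^ 4 : MvPolynomial (Fin 2) ℤ) ∈ Hideal k 1 :=
  Ideal.subset_span (Or.inl rfl)

set_option maxHeartbeats 1000000 in
set_option synthInstance.maxHeartbeats 1000000 in
lemma part2 {k l : ℕ} (hk : 0 < k) (hl : 0 < l) (f : HRing k 1 ≃+* HRing l 1)
    (ε₁ ε₂ c : ℤ) (h1 : ε₁ = 1 ∨ ε₁ = -1) (h2 : ε₂ = 1 ∨ ε₂ = -1)
    (hf1 : f (Ht k 1 0) = ε₁ • (Ht l 1 0 + c • Ht l 1 1))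
    (hf2 : f (Ht k 1 1) = ε₂ • Ht l 1 1) :
    c = 0 ∧ k = l := by
  have hf1' : f (Ideal.Quotient.mk (Hideal k 1) (X 0)) =
      ε₁ • (Ideal.Quotient.mk (Hideal l 1) (X 0) +
        c • Ideal.Quotient.mk (Hideal l 1) (X 1)) := hf1
  have hf2' : f (Ideal.Quotient.mk (Hideal k 1) (X 1)) =
      ε₂ • Ideal.Quotient.mk (Hideal l 1) (X 1) := hf2
  have hP0 : Ideal.Quotient.mk (Hideal l 1)
      ((ε₁ • (X 0 + c • X 1)) ^ 4 +
        (k : ℤ) • ((ε₁ • (X 0 + c • X 1)) ^ 3 * (ε₂ • X 1))) = 0 := by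
    have h0 : f (Ideal.Quotient.mk (Hideal k 1)
        (X 0 ^ 4 + (k : ℤ) • (X 0 ^ 3 * X 1))) = 0 := by
      rw [Ideal.Quotient.eq_zero_iff_mem.mpr (hgen_mem k), map_zero]
    rw [map_add, map_pow, map_zsmul, map_mul, map_pow] at h0
    rw [map_add, map_pow, map_zsmul, map_mul, map_pow, hf1', hf2'] at h0
    simpa only [map_add, map_pow, map_zsmul, map_mul] using h0
  have hmem := Ideal.Quotient.eq_zero_iff_mem.mp hP0
  have hA : ε₁ ^ 2 = 1 := by rcases h1 with rfl | rfl <;> norm_num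
  have hS : ε₂ ^ 2 = 1 := by rcases h2 with rfl | rfl <;> norm_num
  obtain ⟨hc, hkl⟩ := key (l := l) (k := k) hA hS hmem
  refine ⟨hc, ?_⟩
  rcases h1 with rfl | rfl <;> rcases h2 with rfl | rfl <;> norm_num at hkl <;> omega

lemma mk_lin_inj' {l : ℕ} {u v u' v' : ℤ}
    (h : Ideal.Quotient.mk (Hideal l 1) (C u * X 0 + C v * X 1) =
      Ideal.Quotient.mk (Hideal l 1) (C u' * X 0 + C v' * X 1)) :
    u = u' ∧ v = v' := by
  have hsub : Ideal.Quotient.mk (Hideal l 1)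
      (C (u - u') * X 0 + C (v - v') * X 1) = 0 := by
    have heq : (C (u - u') * X 0 + C (v - v') * X 1 : MvPolynomial (Fin 2) ℤ) =
        (C u * X 0 + C v * X 1) - (C u' * X 0 + C v' * X 1) := by
      simp only [map_sub]; ring
    rw [heq, map_sub, h, sub_self]
  obtain ⟨h1, h2⟩ := mk_lin_inj hsub
  constructor <;> omega


end Stmt14Aux

open Stmt14Aux in
set_option maxHeartbeats 4000000 in
set_option synthInstance.maxHeartbeats 1000000 in
theorem stmt14 (k l : ℕ) (hk : 0 < k) (hl : 0 < l) :
    ((∃ f : HRing k 1 ≃+* HRing l 1, IsGradedIso f) ↔ k = l) ∧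
    ∀ (f : HRing k 1 ≃+* HRing l 1), IsGradedIso f →
      ∀ (ε₁ ε₂ c : ℤ), (ε₁ = 1 ∨ ε₁ = -1) → (ε₂ = 1 ∨ ε₂ = -1) →
        f (Ht k 1 0) = ε₁ • (Ht l 1 0 + c • Ht l 1 1) →
        f (Ht k 1 1) = ε₂ • Ht l 1 1 →
        c = 0 ∧ k = l := by
  refine ⟨⟨?_, ?_⟩, fun f hf ε₁ ε₂ c h1 h2 hh1 hh2 => part2 hk hl f ε₁ ε₂ c h1 h2 hh1 hh2⟩
  · rintro ⟨f, hgr⟩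
    obtain ⟨y₁, hy₁h, hy₁⟩ := hgr.1 1 (X 0) (isHomogeneous_X _ _)
    obtain ⟨y₂, hy₂h, hy₂⟩ := hgr.1 1 (X 1) (isHomogeneous_X _ _)
    obtain ⟨z₁, hz₁h, hz₁⟩ := hgr.2 1 (X 0) (isHomogeneous_X _ _)
    obtain ⟨z₂, hz₂h, hz₂⟩ := hgr.2 1 (X 1) (isHomogeneous_X _ _)
    have hy₁' : f (Ideal.Quotient.mk (Hideal k 1) (X 0)) =
        Ideal.Quotient.mk (Hideal l 1) y₁ := hy₁
    have hy₂' : f (Ideal.Quotient.mk (Hideal k 1) (X 1)) =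
        Ideal.Quotient.mk (Hideal l 1) y₂ := hy₂
    have hz₁' : f.symm (Ideal.Quotient.mk (Hideal l 1) (X 0)) =
        Ideal.Quotient.mk (Hideal k 1) z₁ := hz₁
    have hz₂' : f.symm (Ideal.Quotient.mk (Hideal l 1) (X 1)) =
        Ideal.Quotient.mk (Hideal k 1) z₂ := hz₂
    obtain ⟨a1, b1, hy₁e⟩ : ∃ a b, y₁ = C a * X 0 + C b * X 1 := ⟨_, _, homog1 hy₁h⟩
    obtain ⟨a2, b2, hy₂e⟩ : ∃ a b, y₂ = C a * X 0 + C b * X 1 := ⟨_, _, homog1 hy₂h⟩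
    obtain ⟨g1, d1, hz₁e⟩ : ∃ a b, z₁ = C a * X 0 + C b * X 1 := ⟨_, _, homog1 hz₁h⟩
    obtain ⟨g2, d2, hz₂e⟩ : ∃ a b, z₂ = C a * X 0 + C b * X 1 := ⟨_, _, homog1 hz₂h⟩
    -- a2 = 0
    have h4mem : ((C a2 * X 0 + C b2 * X 1 : MvPolynomial (Fin 2) ℤ)) ^ 4 ∈ Hideal l 1 := by
      apply Ideal.Quotient.eq_zero_iff_mem.mp
      have step : Ideal.Quotient.mk (Hideal l 1) ((C a2 * X 0 + C b2 * X 1) ^ 4) =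
          (f (Ideal.Quotient.mk (Hideal k 1) (X 1))) ^ 4 := by
        rw [map_pow, ← hy₂e, ← hy₂']
      rw [step, ← map_pow, ← map_pow, Ideal.Quotient.eq_zero_iff_mem.mpr (hX14_mem k),
        map_zero]
    have ha2 : a2 = 0 := y2_a_zero hl h4mem
    -- image of a generic linear element
    have himg : ∀ g d : ℤ, f (Ideal.Quotient.mk (Hideal k 1) (C g * X 0 + C d * X 1)) =
        Ideal.Quotient.mk (Hideal l 1)
          (C (g * a1 + d * a2) * X 0 + C (g * b1 + d * b2) * X 1) := by
      intro g d
      have expand : (C g * X 0 + C d * X 1 : MvPolynomial (Fin 2) ℤ) =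
          g • X 0 + d • X 1 := by simp [smul_eq_C_mul]
      calc f (Ideal.Quotient.mk (Hideal k 1) (C g * X 0 + C d * X 1))
          = f (g • Ideal.Quotient.mk (Hideal k 1) (X 0) +
              d • Ideal.Quotient.mk (Hideal k 1) (X 1)) := by
            rw [expand, map_add, map_zsmul, map_zsmul]
        _ = g • f (Ideal.Quotient.mk (Hideal k 1) (X 0)) +
              d • f (Ideal.Quotient.mk (Hideal k 1) (X 1)) := by
            rw [map_add, map_zsmul, map_zsmul]
        _ = g • Ideal.Quotient.mk (Hideal l 1) y₁ +
              d • Ideal.Quotient.mk (Hideal l 1) y₂ := by rw [hy₁', hy₂']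
        _ = Ideal.Quotient.mk (Hideal l 1) (g • y₁ + d • y₂) := by
            rw [map_add, map_zsmul, map_zsmul]
        _ = Ideal.Quotient.mk (Hideal l 1)
              (C (g * a1 + d * a2) * X 0 + C (g * b1 + d * b2) * X 1) := by
            rw [hy₁e, hy₂e]
            congr 1
            simp only [smul_eq_C_mul, map_mul, map_add]
            ring
    -- invertibility facts
    have h1eq : f (Ideal.Quotient.mk (Hideal k 1) z₁) =
        Ideal.Quotient.mk (Hideal l 1) (X 0) := by
      rw [← hz₁']; exact f.apply_symm_apply _
    have h2eq : f (Ideal.Quotient.mk (Hideal k 1) z₂) =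
        Ideal.Quotient.mk (Hideal l 1) (X 1) := by
      rw [← hz₂']; exact f.apply_symm_apply _
    have h1eq' : Ideal.Quotient.mk (Hideal l 1)
        (C (g1 * a1 + d1 * a2) * X 0 + C (g1 * b1 + d1 * b2) * X 1) =
        Ideal.Quotient.mk (Hideal l 1) (C 1 * X 0 + C 0 * X 1) := by
      rw [← himg g1 d1, ← hz₁e, h1eq]; simp
    have h2eq' : Ideal.Quotient.mk (Hideal l 1)
        (C (g2 * a1 + d2 * a2) * X 0 + C (g2 * b1 + d2 * b2) * X 1) =
        Ideal.Quotient.mk (Hideal l 1) (C 0 * X 0 + C 1 * X 1) := by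
      rw [← himg g2 d2, ← hz₂e, h2eq]; simp
    obtain ⟨hu1, hu2⟩ := mk_lin_inj' h1eq'
    obtain ⟨hv1, hv2⟩ := mk_lin_inj' h2eq'
    rw [ha2] at hu1 hv1
    simp only [mul_zero, add_zero] at hu1 hv1
    have ha1unit : a1 = 1 ∨ a1 = -1 :=
      Int.isUnit_iff.mp (IsUnit.of_mul_eq_one (a := a1) g1 (by rw [mul_comm]; exact hu1))
    have hg2 : g2 = 0 := by
      rcases mul_eq_zero.mp hv1 with h | h
      · exact h
      · rcases ha1unit with h' | h' <;> omega
    have hb2unit : b2 = 1 ∨ b2 = -1 := by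
      rw [hg2] at hv2
      simp only [zero_mul, zero_add] at hv2
      exact Int.isUnit_iff.mp (IsUnit.of_mul_eq_one (a := b2) d2 (by rw [mul_comm]; exact hv2))
    -- the normal forms required by part2
    have ha1sq : C a1 * C a1 = (1 : MvPolynomial (Fin 2) ℤ) := by
      rcases ha1unit with rfl | rfl <;> norm_num
    have hf1 : f (Ht k 1 0) = a1 • (Ht l 1 0 + (a1 * b1) • Ht l 1 1) := by
      have hr : a1 • (Ht l 1 0 + (a1 * b1) • Ht l 1 1) =
          Ideal.Quotient.mk (Hideal l 1) (C a1 * X 0 + C b1 * X 1) := by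
        show a1 • (Ideal.Quotient.mk (Hideal l 1) (X 0) +
          (a1 * b1) • Ideal.Quotient.mk (Hideal l 1) (X 1)) = _
        rw [← map_zsmul, ← map_add, ← map_zsmul]
        congr 1
        simp only [smul_eq_C_mul, map_mul]
        linear_combination (C b1 * X 1 : MvPolynomial (Fin 2) ℤ) * ha1sq
      rw [hr]
      show f (Ideal.Quotient.mk (Hideal k 1) (X 0)) = _
      rw [hy₁', hy₁e]
    have hf2 : f (Ht k 1 1) = b2 • Ht l 1 1 := by
      show f (Ideal.Quotient.mk (Hideal k 1) (X 1)) =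
        b2 • Ideal.Quotient.mk (Hideal l 1) (X 1)
      rw [hy₂', hy₂e, ha2, ← map_zsmul]
      congr 1
      simp [smul_eq_C_mul]
    exact (part2 hk hl f a1 b2 (a1 * b1) ha1unit hb2unit hf1 hf2).2
  · rintro rfl
    exact ⟨RingEquiv.refl _, fun j x hx => ⟨x, hx, rfl⟩, fun j x hx => ⟨x, hx, rfl⟩⟩
end
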